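/- Let E be a Banach space such that 𝒜(E) has a right approximate identity. Then the map F ↦ 𝓡(F) := {T ∈ 𝒜(E) : im T ⊆ F} is a lattice isomorphism from the lattice of closed linear subspaces of E onto the lattice of closed right ideals of 𝒜(E), with inverse I ↦ the closed linear span of ⋃_{T ∈ I} im T. -/

import Mathlib

variable {E : Type*} [NormedAddCommGroup E] [NormedSpace ℂ E] [CompleteSpace E]

/-- The algebra `𝒜(E)` of approximable operators: the norm closure of the finite-rank operators
in `B(E)`. -/
def ApproxOps (E : Type*) [NormedAddCommGroup E] [NormedSpace ℂ E] : Set (E →L[ℂ] E) :=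
  closure {T : E →L[ℂ] E | FiniteDimensional ℂ (LinearMap.range (T : E →ₗ[ℂ] E))}

/-- A closed right ideal of the Banach algebra `𝒜(E)`. -/
def IsClosedRightIdealAppr (E : Type*) [NormedAddCommGroup E] [NormedSpace ℂ E]
    (I : Set (E →L[ℂ] E)) : Prop :=
  I ⊆ ApproxOps E ∧ IsClosed I ∧ (0 : E →L[ℂ] E) ∈ I ∧
    (∀ x ∈ I, ∀ y ∈ I, x + y ∈ I) ∧ (∀ (c : ℂ), ∀ x ∈ I, c • x ∈ I) ∧
    ∀ T ∈ I, ∀ S ∈ ApproxOps E, T.comp S ∈ I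

/-- `𝓡(F) = {T ∈ 𝒜(E) : im T ⊆ F}`. -/
def RIdeal (E : Type*) [NormedAddCommGroup E] [NormedSpace ℂ E] (F : Submodule ℂ E) :
    Set (E →L[ℂ] E) :=
  {T | T ∈ ApproxOps E ∧ ∀ x : E, T x ∈ F}

/-- The inverse map: the closed linear span of `⋃_{T ∈ I} im T`. -/
def XiHat (E : Type*) [NormedAddCommGroup E] [NormedSpace ℂ E]
    (I : Set (E →L[ℂ] E)) : Submodule ℂ E :=
  (Submodule.span ℂ (⋃ T ∈ I, Set.range T)).topologicalClosure

namespace Aux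

/-- The finite-rank operators form a submodule. -/
def frSubmodule (E : Type*) [NormedAddCommGroup E] [NormedSpace ℂ E] :
    Submodule ℂ (E →L[ℂ] E) where
  carrier := {T : E →L[ℂ] E | FiniteDimensional ℂ (LinearMap.range (T : E →ₗ[ℂ] E))}
  zero_mem' := by
    show FiniteDimensional ℂ (LinearMap.range ((0 : E →L[ℂ] E) : E →ₗ[ℂ] E))
    rw [show ((0 : E →L[ℂ] E) : E →ₗ[ℂ] E) = 0 from rfl, LinearMap.range_zero]
    infer_instance
  add_mem' := by
    intro a b ha hb
    haveI : FiniteDimensional ℂ (LinearMap.range (a : E →ₗ[ℂ] E)) := ha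
    haveI : FiniteDimensional ℂ (LinearMap.range (b : E →ₗ[ℂ] E)) := hb
    have hle : LinearMap.range ((a + b : E →L[ℂ] E) : E →ₗ[ℂ] E) ≤
        LinearMap.range (a : E →ₗ[ℂ] E) ⊔ LinearMap.range (b : E →ₗ[ℂ] E) := by
      rintro y ⟨x, rfl⟩
      exact Submodule.add_mem_sup (LinearMap.mem_range_self _ x) (LinearMap.mem_range_self _ x)
    exact Submodule.finiteDimensional_of_le hle
  smul_mem' := by
    intro c a ha
    haveI : FiniteDimensional ℂ (LinearMap.range (a : E →ₗ[ℂ] E)) := ha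
    have hle : LinearMap.range ((c • a : E →L[ℂ] E) : E →ₗ[ℂ] E) ≤
        LinearMap.range (a : E →ₗ[ℂ] E) := by
      rintro y ⟨x, rfl⟩
      exact Submodule.smul_mem _ c (LinearMap.mem_range_self _ x)
    exact Submodule.finiteDimensional_of_le hle

lemma approxOps_eq (E : Type*) [NormedAddCommGroup E] [NormedSpace ℂ E] :
    ApproxOps E = ((frSubmodule E).topologicalClosure : Set (E →L[ℂ] E)) := by
  simp [ApproxOps, Submodule.topologicalClosure_coe, frSubmodule]

lemma approxOps_isClosed : IsClosed (ApproxOps E) := isClosed_closure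

lemma fr_mem_approxOps {T : E →L[ℂ] E}
    (h : FiniteDimensional ℂ (LinearMap.range (T : E →ₗ[ℂ] E))) : T ∈ ApproxOps E :=
  subset_closure h

lemma zero_mem_approxOps : (0 : E →L[ℂ] E) ∈ ApproxOps E :=
  fr_mem_approxOps (frSubmodule E).zero_mem

lemma add_mem_approxOps {a b : E →L[ℂ] E} (ha : a ∈ ApproxOps E) (hb : b ∈ ApproxOps E) :
    a + b ∈ ApproxOps E := by
  rw [approxOps_eq] at *
  exact Submodule.add_mem _ ha hb

lemma smul_mem_approxOps (c : ℂ) {a : E →L[ℂ] E} (ha : a ∈ ApproxOps E) :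
    c • a ∈ ApproxOps E := by
  rw [approxOps_eq] at *
  exact Submodule.smul_mem _ c ha

lemma comp_fr {T S : E →L[ℂ] E}
    (h : FiniteDimensional ℂ (LinearMap.range (T : E →ₗ[ℂ] E))) :
    FiniteDimensional ℂ (LinearMap.range ((T.comp S : E →L[ℂ] E) : E →ₗ[ℂ] E)) := by
  haveI := h
  have hle : LinearMap.range ((T.comp S : E →L[ℂ] E) : E →ₗ[ℂ] E) ≤
      LinearMap.range (T : E →ₗ[ℂ] E) := by
    rintro y ⟨x, rfl⟩
    exact LinearMap.mem_range_self _ (S x)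
  exact Submodule.finiteDimensional_of_le hle

lemma comp_mem_approxOps {T : E →L[ℂ] E} (hT : T ∈ ApproxOps E) (S : E →L[ℂ] E) :
    T.comp S ∈ ApproxOps E := by
  have hcont : Continuous fun R : E →L[ℂ] E => R.comp S :=
    ((ContinuousLinearMap.compL ℂ E E E).flip S).continuous
  have : (fun R : E →L[ℂ] E => R.comp S) T ∈
      closure {T : E →L[ℂ] E | FiniteDimensional ℂ (LinearMap.range (T : E →ₗ[ℂ] E))} :=
    map_mem_closure (f := fun R : E →L[ℂ] E => R.comp S) hcont hT fun R hR => comp_fr hR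
  exact this

lemma smulRight_mem_approxOps (φ : E →L[ℂ] ℂ) (x : E) :
    φ.smulRight x ∈ ApproxOps E := by
  apply fr_mem_approxOps
  have hle : LinearMap.range ((φ.smulRight x : E →L[ℂ] E) : E →ₗ[ℂ] E) ≤ ℂ ∙ x := by
    rintro y ⟨z, rfl⟩
    exact Submodule.smul_mem _ _ (Submodule.mem_span_singleton_self x)
  exact Submodule.finiteDimensional_of_le hle

lemma sum_mem_ideal {I : Set (E →L[ℂ] E)} (hI : IsClosedRightIdealAppr E I)
    {ι : Type*} (s : Finset ι) (f : ι → E →L[ℂ] E) (h : ∀ k ∈ s, f k ∈ I) :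
    ∑ k ∈ s, f k ∈ I :=
  Finset.sum_induction f (· ∈ I) (fun a b ha hb => hI.2.2.2.1 a ha b hb) hI.2.2.1 h

/-- Rank-one operators with range vector in `XiHat I` belong to `I`. -/
lemma rankOne_mem {I : Set (E →L[ℂ] E)} (hI : IsClosedRightIdealAppr E I)
    (φ : E →L[ℂ] ℂ) {x : E} (hx : x ∈ XiHat E I) : φ.smulRight x ∈ I := by
  set L : E →L[ℂ] E →L[ℂ] E := ContinuousLinearMap.smulRightL ℂ E E φ with hL
  have hLapp : ∀ y : E, L y = φ.smulRight y := fun y => rfl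
  let q : Submodule ℂ E :=
    { carrier := {y : E | L y ∈ I}
      zero_mem' := by simpa using hI.2.2.1
      add_mem' := fun {a b} ha hb => by
        have := hI.2.2.2.1 _ ha _ hb
        simpa [map_add] using this
      smul_mem' := fun c a ha => by
        have := hI.2.2.2.2.1 c _ ha
        simpa [map_smul] using this }
  have hqclosed : IsClosed (q : Set E) := hI.2.1.preimage L.continuous
  have hspan : Submodule.span ℂ (⋃ T ∈ I, Set.range T) ≤ q := by
    rw [Submodule.span_le]
    rintro y hy
    simp only [Set.mem_iUnion] at hy
    obtain ⟨R, hR, z, rfl⟩ := hy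
    show L (R z) ∈ I
    have : L (R z) = R.comp (φ.smulRight z) := by
      ext w
      simp [hLapp]
    rw [this]
    exact hI.2.2.2.2.2 R hR _ (smulRight_mem_approxOps φ z)
  have : XiHat E I ≤ q := Submodule.topologicalClosure_minimal _ hspan hqclosed
  exact this hx

/-- If every value of `T` lies in `XiHat I` and `S` has finite rank, then `T ∘ S ∈ I`. -/
lemma comp_fr_mem {I : Set (E →L[ℂ] E)} (hI : IsClosedRightIdealAppr E I)
    (T : E →L[ℂ] E) (hT : ∀ x : E, T x ∈ XiHat E I) (S : E →L[ℂ] E)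
    (hS : FiniteDimensional ℂ (LinearMap.range (S : E →ₗ[ℂ] E))) : T.comp S ∈ I := by
  haveI := hS
  set V := LinearMap.range (S : E →ₗ[ℂ] E) with hV
  let b := Module.finBasis ℂ V
  have hmem : ∀ x : E, S x ∈ V := fun x => LinearMap.mem_range_self _ x
  let Sc : E →L[ℂ] V := S.codRestrict V hmem
  let ψ : Fin (Module.finrank ℂ V) → (E →L[ℂ] ℂ) := fun k =>
    (LinearMap.toContinuousLinearMap (b.coord k)).comp Sc
  have key : T.comp S = ∑ k, (ψ k).smulRight (T (b k : E)) := by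
    ext x
    have h1 : (∑ k, (ψ k).smulRight (T (b k : E))) x
        = ∑ k, (b.repr (Sc x)) k • T (b k : E) := by
      simp [ψ, Module.Basis.coord_apply]
    rw [ContinuousLinearMap.comp_apply, h1]
    have h2 : ∑ k, (b.repr (Sc x)) k • T ((b k : V) : E)
        = T (∑ k, (b.repr (Sc x)) k • ((b k : V) : E)) := by
      rw [map_sum]
      simp [map_smul]
    rw [h2]
    congr 1
    have h3 : (∑ k, (b.repr (Sc x)) k • ((b k : V) : E))
        = ((∑ k, (b.repr (Sc x)) k • b k : V) : E) := by
      push_cast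
      rfl
    rw [h3, b.sum_repr (Sc x)]
    rfl
  rw [key]
  exact sum_mem_ideal hI _ _ fun k _ => rankOne_mem hI (ψ k) (hT (b k : E))

lemma mem_of_range_subset {I : Set (E →L[ℂ] E)} (hI : IsClosedRightIdealAppr E I)
    (rai : ∃ (ι : Type) (l : Filter ι) (e : ι → (E →L[ℂ] E)), l.NeBot ∧
      (∀ i, e i ∈ ApproxOps E) ∧
      ∀ a ∈ ApproxOps E, Filter.Tendsto (fun i => a.comp (e i)) l (nhds a))
    (T : E →L[ℂ] E) (hT : T ∈ ApproxOps E) (hr : ∀ x : E, T x ∈ XiHat E I) : T ∈ I := by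
  have step1 : ∀ S ∈ ApproxOps E, T.comp S ∈ I := by
    intro S hS
    rw [ApproxOps, mem_closure_iff_seq_limit] at hS
    obtain ⟨f, hf, hflim⟩ := hS
    have hconv : Filter.Tendsto (fun n => T.comp (f n)) Filter.atTop (nhds (T.comp S)) := by
      have hcont : Continuous fun R : E →L[ℂ] E => T.comp R :=
        (ContinuousLinearMap.compL ℂ E E E T).continuous
      exact (hcont.tendsto S).comp hflim
    exact hI.2.1.mem_of_tendsto hconv (Filter.Eventually.of_forall fun n =>
      comp_fr_mem hI T hr (f n) (hf n))
  obtain ⟨ι, l, e, hne, he, hconv⟩ := rai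
  haveI := hne
  exact hI.2.1.mem_of_tendsto (hconv T hT)
    (Filter.Eventually.of_forall fun i => step1 (e i) (he i))

end Aux


open Aux in
/-- Let `E` be a Banach space such that `𝒜(E)` has a right approximate
identity. Then `F ↦ 𝓡(F)` is a lattice isomorphism from the closed linear subspaces of `E` onto
the closed right ideals of `𝒜(E)`, with inverse `I ↦ closed span of ⋃_{T ∈ I} im T`. -/
theorem rIdeal_lattice_iso
    (rai : ∃ (ι : Type) (l : Filter ι) (e : ι → (E →L[ℂ] E)), l.NeBot ∧
      (∀ i, e i ∈ ApproxOps E) ∧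
      ∀ a ∈ ApproxOps E, Filter.Tendsto (fun i => a.comp (e i)) l (nhds a)) :
    (∀ F : Submodule ℂ E, IsClosed (F : Set E) → IsClosedRightIdealAppr E (RIdeal E F)) ∧
    (∀ F : Submodule ℂ E, IsClosed (F : Set E) → XiHat E (RIdeal E F) = F) ∧
    (∀ I : Set (E →L[ℂ] E), IsClosedRightIdealAppr E I → RIdeal E (XiHat E I) = I) ∧
    (∀ F₁ F₂ : Submodule ℂ E, IsClosed (F₁ : Set E) → IsClosed (F₂ : Set E) →
      (F₁ ≤ F₂ ↔ RIdeal E F₁ ⊆ RIdeal E F₂)) := by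
  -- Key fact: for `x ∈ F` (`x ≠ 0`) there is a rank-one operator in `RIdeal E F` hitting `x`.
  have hrk : ∀ (F : Submodule ℂ E), ∀ x ∈ F, x ≠ 0 →
      ∃ T ∈ RIdeal E F, ∃ c : ℂ, x = c • T x := by
    intro F x hxF hx0
    obtain ⟨φ, -, hφx⟩ := exists_dual_vector ℂ x (norm_ne_zero_iff.2 hx0)
    have hn : ‖x‖ ≠ 0 := norm_ne_zero_iff.2 hx0
    have hcn : φ x ≠ 0 := by
      rw [hφx]
      simpa using hn
    refine ⟨φ.smulRight x, ⟨smulRight_mem_approxOps φ x, fun y => ?_⟩, (φ x)⁻¹, ?_⟩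
    · exact Submodule.smul_mem _ _ hxF
    · rw [ContinuousLinearMap.smulRight_apply, smul_smul, inv_mul_cancel₀ hcn, one_smul]
  refine ⟨?_, ?_, ?_, ?_⟩
  · -- RIdeal F is a closed right ideal
    intro F hF
    refine ⟨fun T hT => hT.1, ?_, ⟨zero_mem_approxOps, fun x => F.zero_mem⟩,
      ?_, ?_, ?_⟩
    · have heq : RIdeal E F =
          ApproxOps E ∩ ⋂ x : E, (fun T : E →L[ℂ] E => T x) ⁻¹' (F : Set E) := by
        ext T
        simp [RIdeal, Set.mem_iInter]
      rw [heq]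
      refine approxOps_isClosed.inter (isClosed_iInter fun x => hF.preimage ?_)
      exact (ContinuousLinearMap.apply ℂ E x).continuous
    · rintro a ⟨ha1, ha2⟩ b ⟨hb1, hb2⟩
      exact ⟨add_mem_approxOps ha1 hb1, fun x => F.add_mem (ha2 x) (hb2 x)⟩
    · rintro c a ⟨ha1, ha2⟩
      exact ⟨smul_mem_approxOps c ha1, fun x => F.smul_mem c (ha2 x)⟩
    · rintro T ⟨hT1, hT2⟩ S hS
      exact ⟨comp_mem_approxOps hT1 S, fun x => hT2 (S x)⟩
  · -- XiHat (RIdeal F) = F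
    intro F hF
    apply le_antisymm
    · apply Submodule.topologicalClosure_minimal _ _ hF
      rw [Submodule.span_le]
      rintro y hy
      simp only [Set.mem_iUnion] at hy
      obtain ⟨T, hT, z, rfl⟩ := hy
      exact hT.2 z
    · intro x hxF
      by_cases hx0 : x = 0
      · simp [hx0]
      obtain ⟨T, hT, c, hc⟩ := hrk F x hxF hx0
      have : T x ∈ Submodule.span ℂ (⋃ S ∈ RIdeal E F, Set.range S) := by
        apply Submodule.subset_span
        simp only [Set.mem_iUnion]
        exact ⟨T, hT, x, rfl⟩
      have hmem : T x ∈ XiHat E (RIdeal E F) := Submodule.le_topologicalClosure _ this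
      rw [hc]
      exact Submodule.smul_mem _ c hmem
  · -- RIdeal (XiHat I) = I
    intro I hI
    apply Set.Subset.antisymm
    · rintro T ⟨hT1, hT2⟩
      exact mem_of_range_subset hI rai T hT1 hT2
    · intro T hT
      refine ⟨hI.1 hT, fun x => ?_⟩
      apply Submodule.le_topologicalClosure
      apply Submodule.subset_span
      simp only [Set.mem_iUnion]
      exact ⟨T, hT, x, rfl⟩
  · -- order iso
    intro F₁ F₂ hF₁ hF₂
    constructor
    · rintro h T ⟨hT1, hT2⟩
      exact ⟨hT1, fun x => h (hT2 x)⟩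
    · intro h x hxF₁
      by_cases hx0 : x = 0
      · simp [hx0]
      obtain ⟨T, hT, c, hc⟩ := hrk F₁ x hxF₁ hx0
      have hT2 : T ∈ RIdeal E F₂ := h hT
      rw [hc]
      exact Submodule.smul_mem _ c (hT2.2 x)
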